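/- arXiv:2111.07081 — 3 statements merged into one kernel-verified Lean document; each statement's English description precedes it below -/
import Mathlib

section
/- Let k be a field, A a k-algebra, and φ ∈ A* a linear functional. Then m*(φ) ∈ (A ⊗ A)* lies in the image of A* ⊗ A* ⊆ (A ⊗ A)* if and only if the kernel of φ contains a two-sided ideal I of A of finite codimension. -/
open TensorProduct Module

/-- A functional `φ ∈ A*` satisfies condition (SD1) — `m*(φ)` lies in the image of
`A* ⊗ A* ⊆ (A ⊗ A)*` — if and only if it satisfies (SD2) — `ker φ` contains a two-sided
ideal of finite codimension. -/
theorem finiteDual_mem_iff (k : Type*) [Field k] (A : Type*) [Ring A] [Algebra k A]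
    (φ : Dual k A) :
    (∃ t : Dual k A ⊗[k] Dual k A,
        ∀ a b : A, TensorProduct.dualDistrib k A A t (a ⊗ₜ[k] b) = φ (a * b)) ↔
    (∃ I : Submodule k A,
        (∀ (a x : A), x ∈ I → a * x ∈ I ∧ x * a ∈ I) ∧
        FiniteDimensional k (A ⧸ I) ∧
        ∀ x ∈ I, φ x = 0) := by
  classical
  constructor
  · rintro ⟨t, ht⟩
    obtain ⟨S, rfl⟩ := TensorProduct.exists_finset t
    -- T x = φ (x * ·)
    set T : A →ₗ[k] Dual k A :=
      (LinearMap.llcomp k A A k φ).comp (LinearMap.mul k A) with hT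
    have hTapp : ∀ x b : A, T x b = φ (x * b) := fun x b => rfl
    -- range T ⊆ span of the second components
    set W : Submodule k (Dual k A) := Submodule.span k (S.image Prod.snd : Set (Dual k A))
      with hW
    have hTW : ∀ x : A, T x ∈ W := by
      intro x
      have : T x = ∑ p ∈ S, p.1 x • p.2 := by
        ext b
        rw [hTapp, ← ht x b]
        simp [TensorProduct.dualDistrib_apply, smul_eq_mul]
      rw [this]
      exact Submodule.sum_mem _ fun p hp => Submodule.smul_mem _ _
        (Submodule.subset_span (Finset.mem_image_of_mem Prod.snd hp))
    set J : Submodule k A := LinearMap.ker T with hJ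
    have hJmem : ∀ x : A, x ∈ J ↔ ∀ b : A, φ (x * b) = 0 := by
      intro x
      simp only [hJ, LinearMap.mem_ker]
      constructor
      · intro h b; rw [← hTapp, h]; rfl
      · intro h; ext b; exact h b
    -- J is a right ideal
    have hJright : ∀ x ∈ J, ∀ r : A, x * r ∈ J := by
      intro x hx r
      rw [hJmem] at hx ⊢
      intro b; rw [mul_assoc]; exact hx (r * b)
    -- A ⧸ J is finite dimensional
    haveI : FiniteDimensional k W := hW ▸ FiniteDimensional.span_finset k _
    have hle : LinearMap.range T ≤ W := by rintro x ⟨y, rfl⟩; exact hTW y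
    haveI : FiniteDimensional k (LinearMap.range T) :=
      @Submodule.finiteDimensional_of_le k (Dual k A) _ _ _ (LinearMap.range T) W ‹_› hle
    haveI hfinJ : FiniteDimensional k (A ⧸ J) := by
      have e : (A ⧸ J) ≃ₗ[k] LinearMap.range T := T.quotKerEquivRange
      exact Module.Finite.equiv e.symm
    -- ρ x is right multiplication by x on A ⧸ J
    have hmapQ : ∀ x : A, J ≤ J.comap (LinearMap.mulRight k x) := by
      intro x a ha
      exact hJright a ha x
    set ρ : A →ₗ[k] ((A ⧸ J) →ₗ[k] (A ⧸ J)) :=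
      { toFun := fun x => Submodule.mapQ J J (LinearMap.mulRight k x) (hmapQ x)
        map_add' := by
          intro x y
          refine Submodule.linearMap_qext _ ?_
          ext a
          simp [Submodule.mapQ_apply, mul_add]
        map_smul' := by
          intro c x
          refine Submodule.linearMap_qext _ ?_
          ext a
          simp [Submodule.mapQ_apply, mul_smul_comm] } with hρ
    have hρapp : ∀ x a : A, ρ x (J.mkQ a) = J.mkQ (a * x) := by
      intro x a
      simp [hρ, Submodule.mapQ_apply]
    set I : Submodule k A := LinearMap.ker ρ with hI
    have hImem : ∀ x : A, x ∈ I ↔ ∀ a b : A, φ (a * x * b) = 0 := by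
      intro x
      simp only [hI, LinearMap.mem_ker]
      constructor
      · intro h a b
        have : ρ x (J.mkQ a) = 0 := by rw [h]; rfl
        rw [hρapp] at this
        have hax : a * x ∈ J := (Submodule.Quotient.mk_eq_zero J).mp this
        exact (hJmem _).mp hax b
      · intro h
        refine LinearMap.ext fun q => ?_
        obtain ⟨a, rfl⟩ := J.mkQ_surjective q
        rw [hρapp]
        simp only [LinearMap.zero_apply]
        rw [Submodule.mkQ_apply, Submodule.Quotient.mk_eq_zero]
        exact (hJmem _).mpr (h a)
    refine ⟨I, ?_, ?_, ?_⟩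
    · intro a x hx
      rw [hImem] at hx
      constructor
      · rw [hImem]
        intro c b
        rw [← mul_assoc c a x]
        exact hx (c * a) b
      · rw [hImem]
        intro c b
        rw [mul_assoc c (x * a) b, mul_assoc x a b, ← mul_assoc c x (a * b)]
        exact hx c (a * b)
    · haveI : FiniteDimensional k ((A ⧸ J) →ₗ[k] (A ⧸ J)) := inferInstance
      have e : (A ⧸ I) ≃ₗ[k] LinearMap.range ρ := ρ.quotKerEquivRange
      exact Module.Finite.equiv e.symm
    · intro x hx
      have := (hImem x).mp hx 1 1
      simpa using this
  · rintro ⟨I, hIdeal, hfin, hker⟩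
    haveI := hfin
    set B0 : A →ₗ[k] Dual k A :=
      (LinearMap.llcomp k A A k φ).comp (LinearMap.mul k A) with hB0
    have hB0app : ∀ a b : A, B0 a b = φ (a * b) := fun a b => rfl
    have h1 : ∀ a : A, I ≤ LinearMap.ker (B0 a) := by
      intro a x hx
      simp only [LinearMap.mem_ker, hB0app]
      exact hker _ (hIdeal a x hx).1
    set B1 : A →ₗ[k] ((A ⧸ I) →ₗ[k] k) :=
      { toFun := fun a => I.liftQ (B0 a) (h1 a)
        map_add' := by
          intro a b; ext x
          simp [Submodule.liftQ_apply, add_mul]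
        map_smul' := by
          intro c a; ext x
          simp [Submodule.liftQ_apply, smul_mul_assoc] } with hB1
    have hB1app : ∀ a x : A, B1 a (I.mkQ x) = φ (a * x) := fun a x => rfl
    have h2 : I ≤ LinearMap.ker B1 := by
      intro x hx
      simp only [LinearMap.mem_ker]
      ext y
      exact (hB1app x y).trans (hker _ (hIdeal y x hx).2)
    set B : (A ⧸ I) →ₗ[k] ((A ⧸ I) →ₗ[k] k) := I.liftQ B1 h2 with hB
    set h : ((A ⧸ I) ⊗[k] (A ⧸ I)) →ₗ[k] k := TensorProduct.lift B with hh
    set s := (TensorProduct.dualDistribEquiv k (A ⧸ I) (A ⧸ I)).symm h with hs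
    have hds : TensorProduct.dualDistrib k (A ⧸ I) (A ⧸ I) s = h := by
      show TensorProduct.dualDistribEquiv k (A ⧸ I) (A ⧸ I) s = h
      rw [hs, LinearEquiv.apply_symm_apply]
    refine ⟨TensorProduct.map I.mkQ.dualMap I.mkQ.dualMap s, fun a b => ?_⟩
    have key : ∀ u : Dual k (A ⧸ I) ⊗[k] Dual k (A ⧸ I),
        TensorProduct.dualDistrib k A A (TensorProduct.map I.mkQ.dualMap I.mkQ.dualMap u)
            (a ⊗ₜ[k] b)
          = TensorProduct.dualDistrib k (A ⧸ I) (A ⧸ I) u (I.mkQ a ⊗ₜ[k] I.mkQ b) := by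
      intro u
      induction u using TensorProduct.induction_on with
      | zero => simp
      | tmul f g => simp [TensorProduct.dualDistrib_apply]
      | add u v hu hv => simp [map_add, hu, hv]
    rw [key s, hds]
    simp only [hh, TensorProduct.lift.tmul]
    exact hB1app a b
end

section
/- Let k be a field and A, B k-algebras with a linear map ρ : B ⊗ A → A ⊗ B. Define m_ρ = (m_A ⊗ m_B) ∘ (id_A ⊗ ρ ⊗ id_B) on (A ⊗ B) ⊗ (A ⊗ B). If ρ is normal and multiplicative, then m_ρ is associative with unit 1_A ⊗ 1_B, making A ⊗ B into an associative unital k-algebra (the twisted tensor product A #_ρ B). -/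
open TensorProduct
set_option synthInstance.maxHeartbeats 1000000
set_option maxHeartbeats 1000000

variable (k : Type*) [Field k] (A B : Type*) [Ring A] [Algebra k A] [Ring B] [Algebra k B]

/-- `ρ` is normal: it restricts to the tensor swap on `1 ⊗ A` and `B ⊗ 1`. -/
def IsNormalTwist (ρ : B ⊗[k] A →ₗ[k] A ⊗[k] B) : Prop :=
  (∀ a : A, ρ ((1 : B) ⊗ₜ[k] a) = a ⊗ₜ[k] (1 : B)) ∧
  (∀ b : B, ρ (b ⊗ₜ[k] (1 : A)) = (1 : A) ⊗ₜ[k] b)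

/-- `ρ` is multiplicative:
`ρ ∘ (id_B ⊗ m_A) = (m_A ⊗ id_B) ∘ (id_A ⊗ ρ) ∘ (ρ ⊗ id_A)` and
`ρ ∘ (m_B ⊗ id_A) = (id_A ⊗ m_B) ∘ (ρ ⊗ id_B) ∘ (id_B ⊗ ρ)`. -/
def IsMultiplicativeTwist (ρ : B ⊗[k] A →ₗ[k] A ⊗[k] B) : Prop :=
  (∀ (b : B) (a a' : A), ρ (b ⊗ₜ[k] (a * a')) =
      TensorProduct.map (LinearMap.mul' k A) LinearMap.id
        ((TensorProduct.assoc k A A B).symm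
          (ρ.lTensor A ((TensorProduct.assoc k A B A)
            (ρ.rTensor A ((b ⊗ₜ[k] a) ⊗ₜ[k] a')))))) ∧
  (∀ (b b' : B) (a : A), ρ ((b * b') ⊗ₜ[k] a) =
      TensorProduct.map LinearMap.id (LinearMap.mul' k B)
        ((TensorProduct.assoc k A B B)
          (ρ.rTensor B ((TensorProduct.assoc k B A B).symm
            (b ⊗ₜ[k] (ρ (b' ⊗ₜ[k] a)))))))

/-- The middle rearrangement `(A ⊗ B) ⊗ A → (A ⊗ A) ⊗ B` induced by `ρ`. -/
noncomputable def twistMiddle (ρ : B ⊗[k] A →ₗ[k] A ⊗[k] B) :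
    (A ⊗[k] B) ⊗[k] A →ₗ[k] (A ⊗[k] A) ⊗[k] B :=
  (TensorProduct.assoc k A A B).symm.toLinearMap ∘ₗ ρ.lTensor A ∘ₗ
    (TensorProduct.assoc k A B A).toLinearMap

/-- The multiplication `m_ρ = (m_A ⊗ m_B) ∘ (id_A ⊗ ρ ⊗ id_B)` of the twisted tensor
product `A #_ρ B`. -/
noncomputable def twistedMul (ρ : B ⊗[k] A →ₗ[k] A ⊗[k] B) :
    (A ⊗[k] B) ⊗[k] (A ⊗[k] B) →ₗ[k] A ⊗[k] B :=
  TensorProduct.map (LinearMap.mul' k A) (LinearMap.mul' k B) ∘ₗ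
    (TensorProduct.assoc k (A ⊗[k] A) B B).toLinearMap ∘ₗ
    (twistMiddle k A B ρ).rTensor B ∘ₗ
    (TensorProduct.assoc k (A ⊗[k] B) A B).symm.toLinearMap

lemma twistedMul_tmul (ρ : B ⊗[k] A →ₗ[k] A ⊗[k] B) (a a' : A) (b b' : B) :
    twistedMul k A B ρ ((a ⊗ₜ[k] b) ⊗ₜ[k] (a' ⊗ₜ[k] b')) =
      TensorProduct.map (LinearMap.mulLeft k a) (LinearMap.mulRight k b') (ρ (b ⊗ₜ[k] a')) := by
  simp only [twistedMul, twistMiddle, LinearMap.comp_apply, LinearEquiv.coe_coe,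
    TensorProduct.assoc_symm_tmul, TensorProduct.assoc_tmul, LinearMap.rTensor_tmul,
    LinearMap.lTensor_tmul]
  generalize ρ (b ⊗ₜ[k] a') = t
  induction t using TensorProduct.induction_on with
  | zero => simp
  | tmul x y => simp [LinearMap.mul'_apply]
  | add u v hu hv => simp only [tmul_add, map_add, add_tmul, hu, hv]

lemma left_assoc_aux (ρ : B ⊗[k] A →ₗ[k] A ⊗[k] B) (hmul : IsMultiplicativeTwist k A B ρ)
    (a a' a'' : A) (b b' b'' : B) :
    twistedMul k A B ρ ((twistedMul k A B ρ ((a ⊗ₜ[k] b) ⊗ₜ[k] (a' ⊗ₜ[k] b'))) ⊗ₜ[k] (a'' ⊗ₜ[k] b'')) =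
      TensorProduct.map (LinearMap.mulLeft k a) (LinearMap.mulRight k b'')
        (twistedMul k A B ρ ((ρ (b ⊗ₜ[k] a')) ⊗ₜ[k] (ρ (b' ⊗ₜ[k] a'')))) := by
  rw [twistedMul_tmul]
  generalize ρ (b ⊗ₜ[k] a') = t
  induction t using TensorProduct.induction_on with
  | zero => simp
  | tmul x y =>
    rw [TensorProduct.map_tmul, LinearMap.mulLeft_apply, LinearMap.mulRight_apply,
      twistedMul_tmul, hmul.2 y b' a'']
    generalize ρ (b' ⊗ₜ[k] a'') = s
    induction s using TensorProduct.induction_on with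
    | zero => simp
    | tmul u v =>
      rw [twistedMul_tmul, TensorProduct.assoc_symm_tmul, LinearMap.rTensor_tmul]
      generalize ρ (y ⊗ₜ[k] u) = r
      induction r using TensorProduct.induction_on with
      | zero => simp
      | tmul p q => simp [LinearMap.mul'_apply, mul_assoc]
      | add r1 r2 h1 h2 => simp only [add_tmul, tmul_add, map_add, h1, h2]
    | add s1 s2 h1 h2 => simp only [add_tmul, tmul_add, map_add, h1, h2]
  | add t1 t2 h1 h2 => simp only [add_tmul, tmul_add, map_add, h1, h2]

lemma right_assoc_aux (ρ : B ⊗[k] A →ₗ[k] A ⊗[k] B) (hmul : IsMultiplicativeTwist k A B ρ)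
    (a a' a'' : A) (b b' b'' : B) :
    twistedMul k A B ρ ((a ⊗ₜ[k] b) ⊗ₜ[k] (twistedMul k A B ρ ((a' ⊗ₜ[k] b') ⊗ₜ[k] (a'' ⊗ₜ[k] b'')))) =
      TensorProduct.map (LinearMap.mulLeft k a) (LinearMap.mulRight k b'')
        (twistedMul k A B ρ ((ρ (b ⊗ₜ[k] a')) ⊗ₜ[k] (ρ (b' ⊗ₜ[k] a'')))) := by
  rw [twistedMul_tmul k A B ρ a' a'' b' b'']
  generalize ρ (b' ⊗ₜ[k] a'') = s
  induction s using TensorProduct.induction_on with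
  | zero => simp
  | tmul u v =>
    rw [TensorProduct.map_tmul, LinearMap.mulLeft_apply, LinearMap.mulRight_apply,
      twistedMul_tmul, hmul.1 b a' u, LinearMap.rTensor_tmul]
    generalize ρ (b ⊗ₜ[k] a') = t
    induction t using TensorProduct.induction_on with
    | zero => simp
    | tmul x y =>
      rw [twistedMul_tmul, TensorProduct.assoc_tmul, LinearMap.lTensor_tmul]
      generalize ρ (y ⊗ₜ[k] u) = r
      induction r using TensorProduct.induction_on with
      | zero => simp
      | tmul p q => simp [LinearMap.mul'_apply, mul_assoc]
      | add r1 r2 h1 h2 => simp only [add_tmul, tmul_add, map_add, h1, h2]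
    | add t1 t2 h1 h2 => simp only [add_tmul, tmul_add, map_add, h1, h2]
  | add s1 s2 h1 h2 => simp only [add_tmul, tmul_add, map_add, h1, h2]

/-- If `ρ` is normal and multiplicative, then `m_ρ` is associative with unit `1 ⊗ 1`,
making `A ⊗ B` into an associative unital algebra (the twisted tensor product). -/
theorem twistedMul_assoc_unital (ρ : B ⊗[k] A →ₗ[k] A ⊗[k] B)
    (hnorm : IsNormalTwist k A B ρ) (hmul : IsMultiplicativeTwist k A B ρ) :
    (twistedMul k A B ρ ∘ₗ (twistedMul k A B ρ).rTensor (A ⊗[k] B) =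
      twistedMul k A B ρ ∘ₗ (twistedMul k A B ρ).lTensor (A ⊗[k] B) ∘ₗ
        (TensorProduct.assoc k (A ⊗[k] B) (A ⊗[k] B) (A ⊗[k] B)).toLinearMap) ∧
    (∀ z : A ⊗[k] B,
      twistedMul k A B ρ (((1 : A) ⊗ₜ[k] (1 : B)) ⊗ₜ[k] z) = z ∧
      twistedMul k A B ρ (z ⊗ₜ[k] ((1 : A) ⊗ₜ[k] (1 : B))) = z) := by
  constructor
  · ext a b a' b' a'' b''
    simp only [LinearMap.comp_apply, LinearMap.rTensor_tmul, LinearMap.lTensor_tmul,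
      LinearEquiv.coe_coe, TensorProduct.assoc_tmul, TensorProduct.AlgebraTensorModule.curry_apply,
      TensorProduct.curry_apply, LinearMap.coe_restrictScalars]
    rw [left_assoc_aux k A B ρ hmul, right_assoc_aux k A B ρ hmul]
  · intro z
    induction z using TensorProduct.induction_on with
    | zero => simp
    | tmul a b =>
      constructor
      · rw [twistedMul_tmul, hnorm.1]
        simp [LinearMap.mul'_apply]
      · rw [twistedMul_tmul, hnorm.2]
        simp [LinearMap.mul'_apply]
    | add z1 z2 h1 h2 =>
      constructor
      · simp only [tmul_add, map_add, h1.1, h2.1]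
      · simp only [add_tmul, map_add, h1.2, h2.2]
end

section
/- Let k be a field and A₀ ⊆ A a finite extension of k-algebras (A finitely generated as both a left and a right A₀-module). A two-sided ideal I of A has finite codimension if and only if there exists a two-sided ideal I₀ of A₀ of finite codimension in A₀ with I₀ ⊆ I. -/
set_option synthInstance.maxHeartbeats 1000000
set_option maxHeartbeats 1000000


/-- Let `A₀ ⊆ A` be a finite extension of `k`-algebras (`A` finitely generated as a left
and as a right `A₀`-module). A two-sided ideal `I` of `A` has finite codimension if and
only if it contains a two-sided ideal of `A₀` of finite codimension in `A₀`. -/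
theorem cofinite_ideal_iff_of_finite_extension (k : Type*) [Field k] (A : Type*) [Ring A]
    [Algebra k A] (A₀ : Subalgebra k A)
    (hfin : ∃ s : Finset A,
      (∀ x : A, x ∈ Submodule.span k {y : A | ∃ a ∈ A₀, ∃ t ∈ s, y = a * t}) ∧
      (∀ x : A, x ∈ Submodule.span k {y : A | ∃ a ∈ A₀, ∃ t ∈ s, y = t * a}))
    (I : Submodule k A) (hI : ∀ (a x : A), x ∈ I → a * x ∈ I ∧ x * a ∈ I) :
    FiniteDimensional k (A ⧸ I) ↔
      ∃ I₀ : Submodule k A₀,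
        (∀ (a x : A₀), x ∈ I₀ → a * x ∈ I₀ ∧ x * a ∈ I₀) ∧
        FiniteDimensional k (A₀ ⧸ I₀) ∧
        ∀ x ∈ I₀, (x : A) ∈ I := by
  classical
  constructor
  · intro hfd
    -- take I₀ = preimage of I in A₀
    set f : A₀ →ₗ[k] A ⧸ I := I.mkQ.comp A₀.val.toLinearMap with hf
    refine ⟨I.comap A₀.val.toLinearMap, ?_, ?_, ?_⟩
    · intro a x hx
      simp only [Submodule.mem_comap, AlgHom.toLinearMap_apply, Subalgebra.coe_val] at hx ⊢
      exact ⟨(hI (a : A) (x : A) hx).1, (hI (a : A) (x : A) hx).2⟩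
    · have hker : LinearMap.ker f = I.comap A₀.val.toLinearMap := by
        ext x
        simp [f, Submodule.Quotient.mk_eq_zero]
      rw [← hker]
      exact LinearEquiv.finiteDimensional f.quotKerEquivRange.symm
    · intro x hx
      exact hx
  · rintro ⟨I₀, hI₀two, hI₀fd, hI₀sub⟩
    obtain ⟨s, hleft, -⟩ := hfin
    -- find a finite set C in A₀ spanning A₀ modulo I₀
    have hfg : (⊤ : Submodule k (A₀ ⧸ I₀)).FG := Module.finite_def.mp hI₀fd
    obtain ⟨T, hT⟩ := hfg
    have hsurj : Function.Surjective I₀.mkQ := Submodule.mkQ_surjective I₀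
    set C : Finset A₀ := T.image (Function.surjInv hsurj) with hC
    have hCspan : ∀ a : A₀, ∃ c ∈ Submodule.span k (C : Set A₀), a - c ∈ I₀ := by
      intro a
      have himg : I₀.mkQ '' (C : Set A₀) = (T : Set (A₀ ⧸ I₀)) := by
        ext z
        constructor
        · rintro ⟨c, hc, rfl⟩
          simp only [hC, Finset.coe_image, Set.mem_image] at hc
          obtain ⟨t, ht, rfl⟩ := hc
          rw [show I₀.mkQ (Function.surjInv hsurj t) = t from
            Function.surjInv_eq hsurj t]
          exact ht
        · intro hz
          exact ⟨Function.surjInv hsurj z, by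
            simp only [hC, Finset.coe_image]; exact Set.mem_image_of_mem _ hz,
            Function.surjInv_eq hsurj z⟩
      have : Submodule.map I₀.mkQ (Submodule.span k (C : Set A₀)) = ⊤ := by
        rw [Submodule.map_span, himg, hT]
      have ha : I₀.mkQ a ∈ Submodule.map I₀.mkQ (Submodule.span k (C : Set A₀)) := by
        rw [this]; trivial
      obtain ⟨c, hc, hceq⟩ := ha
      refine ⟨c, hc, ?_⟩
      have h0 : I₀.mkQ (a - c) = 0 := by rw [map_sub, hceq, sub_self]
      rwa [Submodule.mkQ_apply, Submodule.Quotient.mk_eq_zero] at h0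
    -- the finite set spanning A mod I
    set F : Finset A := (C ×ˢ s).image (fun p => (p.1 : A) * p.2) with hF
    have key : ∀ x : A, I.mkQ x ∈ Submodule.span k (I.mkQ '' (F : Set A)) := by
      intro x
      have hx := hleft x
      induction hx using Submodule.span_induction with
      | mem y hy =>
        obtain ⟨a, ha, t, ht, rfl⟩ := hy
        obtain ⟨c, hc, hci⟩ := hCspan ⟨a, ha⟩
        -- a * t = c * t + (a - c) * t, second term in I
        have hIt : ((⟨a, ha⟩ - c : A₀) : A) * t ∈ I :=
          (hI t _ (hI₀sub _ hci)).2
        have heq : I.mkQ (a * t) = I.mkQ ((c : A) * t) := by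
          rw [Submodule.mkQ_apply, Submodule.mkQ_apply, Submodule.Quotient.eq]
          have : a * t - (c : A) * t = ((⟨a, ha⟩ - c : A₀) : A) * t := by
            rw [AddSubgroupClass.coe_sub, sub_mul]
          rw [this]
          exact hIt
        rw [heq]
        -- use the linear map b ↦ mkQ ((b:A) * t)
        set ψ : A₀ →ₗ[k] A ⧸ I :=
          I.mkQ.comp ((LinearMap.mulRight k t).comp A₀.val.toLinearMap) with hψ
        have hc' : ψ c ∈ Submodule.map ψ (Submodule.span k (C : Set A₀)) :=
          Submodule.mem_map_of_mem hc
        rw [Submodule.map_span] at hc'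
        have hsub : ψ '' (C : Set A₀) ⊆ I.mkQ '' (F : Set A) := by
          rintro z ⟨v, hv, rfl⟩
          refine ⟨(v : A) * t, ?_, rfl⟩
          simp only [hF, Finset.coe_image, Set.mem_image]
          exact ⟨(v, t), by simp [hv, ht], rfl⟩
        have := Submodule.span_mono hsub hc'
        simpa [ψ] using this
      | zero => simp
      | add y z _ _ hy hz =>
        rw [map_add]; exact Submodule.add_mem _ hy hz
      | smul r y _ hy =>
        rw [map_smul]; exact Submodule.smul_mem _ r hy
    have htop : Submodule.span k (I.mkQ '' (F : Set A)) = ⊤ := by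
      rw [eq_top_iff]
      rintro z -
      obtain ⟨x, rfl⟩ := Submodule.mkQ_surjective I z
      exact key x
    have : Module.Finite k (A ⧸ I) := by
      rw [Module.finite_def]
      exact ⟨F.image I.mkQ, by rwa [Finset.coe_image]⟩
    exact this
end
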